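/- Let G be a graph of maximum degree d with edge {i,j}, and let m ≥ 2. The number of ordered m-tuples of edges in N_ij^m that do not contain the edge {i,j} and in which every vertex of V \ {i,j} that appears, appears at least twice, is at most 2^m · (m/2)^m · (2d)^{m/2}. -/

import Mathlib

open Finset

/- STATEMENT 1: the number of ordered m-tuples of edges in N_ij^m that avoid the edge
{i,j} and in which every vertex of V \ {i,j} that appears does so at least twice
is at most 2^m · (m/2)^m · (2d)^{m/2}. -/
open scoped Classical in
theorem stmt1 {V : Type*} [Fintype V] [DecidableEq V]
    (G : SimpleGraph V) [DecidableRel G.Adj] (d : ℕ)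
    (hd : ∀ v : V, G.degree v ≤ d)
    (i j : V) (hij : G.Adj i j) (m : ℕ) (hm : 2 ≤ m)
    (Nij : Finset (Sym2 V))
    (hNij : Nij = G.edgeFinset.filter (fun e => i ∈ e ∨ j ∈ e)) :
    (((Finset.univ : Finset (Fin m → Sym2 V)).filter (fun t =>
        (∀ k, t k ∈ Nij) ∧
        (∀ k, t k ≠ s(i, j)) ∧
        ∀ v : V, v ≠ i → v ≠ j →
          (Finset.univ.filter (fun k => v ∈ t k)).Nonempty →
            2 ≤ (Finset.univ.filter (fun k => v ∈ t k)).card)).card : ℝ)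
      ≤ 2 ^ m * ((m : ℝ) / 2) ^ m * (2 * (d : ℝ)) ^ ((m : ℝ) / 2) := by
  classical
  set h : ℕ := m / 2 with hh
  have hh1 : 1 ≤ h := (Nat.one_le_div_iff (by norm_num)).mpr hm
  have hd1 : 1 ≤ d := by
    have hji : j ∈ G.neighborFinset i := by simpa using hij
    have : 0 < G.degree i := Finset.card_pos.mpr ⟨j, hji⟩
    exact this.trans_le (hd i)
  set S : Finset V := G.neighborFinset i ∪ G.neighborFinset j with hS
  have hjS : j ∈ S := by
    simp only [hS, Finset.mem_union, SimpleGraph.mem_neighborFinset]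
    exact Or.inl hij
  have hScard : S.card ≤ 2 * d := by
    refine le_trans (Finset.card_union_le _ _) ?_
    have h2 : (G.neighborFinset i).card = G.degree i := rfl
    have h3 : (G.neighborFinset j).card = G.degree j := rfl
    have := hd i; have := hd j
    omega
  set A : Finset (Fin m → Sym2 V) :=
    (Finset.univ : Finset (Fin m → Sym2 V)).filter (fun t =>
        (∀ k, t k ∈ Nij) ∧
        (∀ k, t k ≠ s(i, j)) ∧
        ∀ v : V, v ≠ i → v ≠ j →
          (Finset.univ.filter (fun k => v ∈ t k)).Nonempty →
            2 ≤ (Finset.univ.filter (fun k => v ∈ t k)).card) with hA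
  -- the "other endpoint" function
  set f : (Fin m → Sym2 V) → Fin m → V := fun t k =>
    if hx : ∃ v, v ∈ t k ∧ v ≠ i ∧ v ≠ j then hx.choose else j with hf
  -- basic facts about members of A
  have hmemA : ∀ t ∈ A, (∀ k, t k ∈ Nij) ∧ (∀ k, t k ≠ s(i, j)) ∧
      ∀ v : V, v ≠ i → v ≠ j →
        (Finset.univ.filter (fun k => v ∈ t k)).Nonempty →
          2 ≤ (Finset.univ.filter (fun k => v ∈ t k)).card := by
    intro t ht
    simpa [hA] using ht
  have hex : ∀ t ∈ A, ∀ k : Fin m, ∃ v, v ∈ t k ∧ v ≠ i ∧ v ≠ j := by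
    intro t ht k
    obtain ⟨h1, h2, -⟩ := hmemA t ht
    have hk := h1 k
    rw [hNij, Finset.mem_filter] at hk
    obtain ⟨hke, hkij⟩ := hk
    rcases hkij with hi | hj
    · refine ⟨Sym2.Mem.other hi, (Sym2.other_mem hi), ?_, ?_⟩
      · intro hcon
        have hspec := Sym2.other_spec hi
        rw [hcon] at hspec
        have hmem := SimpleGraph.mem_edgeFinset.mp hke
        rw [← hspec] at hmem
        exact G.irrefl hmem
      · intro hcon
        apply h2 k
        rw [← Sym2.other_spec hi, hcon]
    · refine ⟨Sym2.Mem.other hj, (Sym2.other_mem hj), ?_, ?_⟩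
      · intro hcon
        apply h2 k
        rw [← Sym2.other_spec hj, hcon, Sym2.eq_swap]
      · intro hcon
        have hspec := Sym2.other_spec hj
        rw [hcon] at hspec
        have hadj : G.Adj j j := by
          have hmem := SimpleGraph.mem_edgeFinset.mp hke
          rw [← hspec] at hmem
          exact hmem
        exact G.irrefl hadj
  have hfspec : ∀ t ∈ A, ∀ k : Fin m, f t k ∈ t k ∧ f t k ≠ i ∧ f t k ≠ j := by
    intro t ht k
    have := hex t ht k
    simp only [hf, dif_pos this]
    exact this.choose_spec
  -- the edge is determined by membership of i and the other endpoint
  have hkey : ∀ t ∈ A, ∀ k : Fin m,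
      t k = if i ∈ t k then s(i, f t k) else s(j, f t k) := by
    intro t ht k
    obtain ⟨hmem, hni, hnj⟩ := hfspec t ht k
    obtain ⟨h1, h2, -⟩ := hmemA t ht
    have hk := h1 k
    rw [hNij, Finset.mem_filter] at hk
    obtain ⟨hke, hkij⟩ := hk
    by_cases hi : i ∈ t k
    · rw [if_pos hi]
      have hspec := Sym2.other_spec hi
      have : f t k = Sym2.Mem.other hi := by
        have := hmem
        rw [← hspec, Sym2.mem_iff] at this
        rcases this with h' | h'
        · exact absurd h' hni
        · exact h'
      rw [this, hspec]
    · rw [if_neg hi]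
      have hj : j ∈ t k := hkij.resolve_left hi
      have hspec := Sym2.other_spec hj
      have : f t k = Sym2.Mem.other hj := by
        have := hmem
        rw [← hspec, Sym2.mem_iff] at this
        rcases this with h' | h'
        · exact absurd h' hnj
        · exact h'
      rw [this, hspec]
  -- f t k lands in S
  have hfS : ∀ t ∈ A, ∀ k : Fin m, f t k ∈ S := by
    intro t ht k
    obtain ⟨h1, -, -⟩ := hmemA t ht
    have hk := h1 k
    rw [hNij, Finset.mem_filter] at hk
    obtain ⟨hke, -⟩ := hk
    have hadj := SimpleGraph.mem_edgeFinset.mp hke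
    have hkeq := hkey t ht k
    by_cases hi : i ∈ t k
    · rw [if_pos hi] at hkeq
      rw [hkeq] at hadj
      rw [SimpleGraph.mem_edgeSet] at hadj
      simp only [hS, Finset.mem_union, SimpleGraph.mem_neighborFinset]
      exact Or.inl hadj
    · rw [if_neg hi] at hkeq
      rw [hkeq] at hadj
      rw [SimpleGraph.mem_edgeSet] at hadj
      simp only [hS, Finset.mem_union, SimpleGraph.mem_neighborFinset]
      exact Or.inr hadj
  -- membership in t k is the same as being the value of f, for v ∉ {i, j}
  have hmem_iff : ∀ t ∈ A, ∀ (v : V), v ≠ i → v ≠ j → ∀ k : Fin m,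
      (v ∈ t k ↔ f t k = v) := by
    intro t ht v hvi hvj k
    have hkeq := hkey t ht k
    obtain ⟨hmem, -, -⟩ := hfspec t ht k
    constructor
    · intro hv
      by_cases hi : i ∈ t k
      · rw [if_pos hi] at hkeq
        rw [hkeq, Sym2.mem_iff] at hv
        rcases hv with h' | h'
        · exact absurd h' hvi
        · exact h'.symm
      · rw [if_neg hi] at hkeq
        rw [hkeq, Sym2.mem_iff] at hv
        rcases hv with h' | h'
        · exact absurd h' hvj
        · exact h'.symm
    · intro hv; rw [← hv]; exact hmem
  -- the image of f t has at most h elements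
  have himg : ∀ t ∈ A, (Finset.univ.image (f t)).card ≤ h := by
    intro t ht
    obtain ⟨-, -, h3⟩ := hmemA t ht
    have hsum : (Finset.univ : Finset (Fin m)).card =
        ∑ v ∈ Finset.univ.image (f t),
          (Finset.univ.filter (fun k => f t k = v)).card :=
      Finset.card_eq_sum_card_fiberwise (fun k _ => Finset.mem_image_of_mem _ (Finset.mem_univ k))
    have hbig : 2 * (Finset.univ.image (f t)).card ≤ m := by
      have hterm : ∀ v ∈ Finset.univ.image (f t),
          2 ≤ (Finset.univ.filter (fun k => f t k = v)).card := by
        intro v hv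
        obtain ⟨k0, -, hk0⟩ := Finset.mem_image.mp hv
        have hvi : v ≠ i := hk0 ▸ (hfspec t ht k0).2.1
        have hvj : v ≠ j := hk0 ▸ (hfspec t ht k0).2.2
        have hfilter_eq : (Finset.univ.filter (fun k => v ∈ t k)) =
            (Finset.univ.filter (fun k => f t k = v)) := by
          apply Finset.filter_congr
          intro k _
          first
          | exact hmem_iff t ht v hvi hvj k
          | exact eq_iff_iff.mpr (hmem_iff t ht v hvi hvj k)
        have hne : (Finset.univ.filter (fun k => v ∈ t k)).Nonempty := by
          refine ⟨k0, ?_⟩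
          rw [Finset.mem_filter]
          exact ⟨Finset.mem_univ _, (hmem_iff t ht v hvi hvj k0).mpr hk0⟩
        have := h3 v hvi hvj hne
        rwa [hfilter_eq] at this
      calc 2 * (Finset.univ.image (f t)).card
          = ∑ _v ∈ Finset.univ.image (f t), 2 := by
            rw [Finset.sum_const, smul_eq_mul, mul_comm]
        _ ≤ ∑ v ∈ Finset.univ.image (f t),
              (Finset.univ.filter (fun k => f t k = v)).card :=
            Finset.sum_le_sum hterm
        _ = m := by rw [← hsum]; simp
    omega
  -- the coding maps
  set p : (Fin m → Sym2 V) → Fin m → Fin h := fun t k =>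
    if hc : (Finset.univ.image (f t)).card ≤ h then
      Fin.castLE hc ((Finset.univ.image (f t)).equivFin
        ⟨f t k, Finset.mem_image_of_mem _ (Finset.mem_univ k)⟩)
    else ⟨0, by omega⟩ with hp
  set g : (Fin m → Sym2 V) → Fin h → {x // x ∈ S} := fun t x =>
    if hx : ∃ k : Fin m, p t k = x ∧ f t k ∈ S then
      ⟨f t hx.choose, hx.choose_spec.2⟩ else ⟨j, hjS⟩ with hg
  -- recovery of f from (p, g)
  have hrec : ∀ t ∈ A, ∀ k : Fin m, (g t (p t k) : V) = f t k := by
    intro t ht k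
    have hc := himg t ht
    have hxex : ∃ k' : Fin m, p t k' = p t k ∧ f t k' ∈ S := ⟨k, rfl, hfS t ht k⟩
    simp only [hg, dif_pos hxex]
    have hspec := hxex.choose_spec
    set k' := hxex.choose
    have hpk : p t k' = p t k := hspec.1
    simp only [hp, dif_pos hc] at hpk
    have hinj : (⟨f t k', Finset.mem_image_of_mem _ (Finset.mem_univ k')⟩ :
        {x // x ∈ Finset.univ.image (f t)}) =
        ⟨f t k, Finset.mem_image_of_mem _ (Finset.mem_univ k)⟩ := by
      apply (Finset.univ.image (f t)).equivFin.injective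
      exact Fin.castLE_injective hc hpk
    exact congrArg Subtype.val hinj
  -- the injection
  set Φ : (Fin m → Sym2 V) → (Fin m → Bool) × (Fin m → Fin h) × (Fin h → {x // x ∈ S}) :=
    fun t => (fun k => decide (i ∈ t k), p t, g t) with hΦ
  have hinjΦ : Set.InjOn Φ A := by
    intro t ht t' ht' heq
    simp only [hΦ, Prod.mk.injEq] at heq
    obtain ⟨he1, he2, he3⟩ := heq
    funext k
    have hf_eq : f t k = f t' k := by
      rw [← hrec t ht k, ← hrec t' ht' k, he2, he3]
    have hi_iff : i ∈ t k ↔ i ∈ t' k := by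
      constructor
      · intro hi'
        have := congrFun he1 k
        rw [decide_eq_true hi'] at this
        exact of_decide_eq_true this.symm
      · intro hi'
        have := congrFun he1 k
        rw [decide_eq_true hi'] at this
        exact of_decide_eq_true this
    rw [hkey t ht k, hkey t' ht' k, hf_eq]
    by_cases hi' : i ∈ t k
    · rw [if_pos hi', if_pos (hi_iff.mp hi')]
    · rw [if_neg hi', if_neg (fun hc => hi' (hi_iff.mpr hc))]
  -- cardinality bound
  haveI : NeZero h := ⟨by omega⟩
  haveI : Nonempty {x // x ∈ S} := ⟨⟨j, hjS⟩⟩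
  have hcard : A.card ≤ 2 ^ m * h ^ m * S.card ^ h := by
    have := Finset.card_le_card_of_injOn Φ
      (fun t _ => Finset.mem_univ (Φ t)) hinjΦ
    calc A.card ≤ (Finset.univ :
        Finset ((Fin m → Bool) × (Fin m → Fin h) × (Fin h → {x // x ∈ S}))).card := this
      _ = 2 ^ m * h ^ m * S.card ^ h := by
        simp [Fintype.card_fun, mul_assoc]
  -- pass to the reals
  have hA2 : (A.card : ℝ) ≤ 2 ^ m * (h : ℝ) ^ m * (S.card : ℝ) ^ h := by
    calc (A.card : ℝ) ≤ ((2 ^ m * h ^ m * S.card ^ h : ℕ) : ℝ) := by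
          exact_mod_cast hcard
      _ = 2 ^ m * (h : ℝ) ^ m * (S.card : ℝ) ^ h := by push_cast; ring
  refine hA2.trans ?_
  have hhalf : (h : ℝ) ≤ (m : ℝ) / 2 := by
    rw [hh]
    exact_mod_cast Nat.cast_div_le
  have hfac1 : (h : ℝ) ^ m ≤ ((m : ℝ) / 2) ^ m :=
    pow_le_pow_left₀ (Nat.cast_nonneg _) hhalf m
  have hfac2 : (S.card : ℝ) ^ h ≤ (2 * (d : ℝ)) ^ ((m : ℝ) / 2) := by
    have h1 : (S.card : ℝ) ^ h ≤ (2 * (d : ℝ)) ^ h := by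
      have hsd : (S.card : ℝ) ≤ 2 * (d : ℝ) := by exact_mod_cast hScard
      exact pow_le_pow_left₀ (Nat.cast_nonneg _) hsd h
    have h2 : (2 * (d : ℝ)) ^ h = (2 * (d : ℝ)) ^ ((h : ℕ) : ℝ) :=
      (Real.rpow_natCast _ _).symm
    have h3 : (2 * (d : ℝ)) ^ ((h : ℕ) : ℝ) ≤ (2 * (d : ℝ)) ^ ((m : ℝ) / 2) := by
      apply Real.rpow_le_rpow_of_exponent_le
      · have : (1 : ℝ) ≤ (d : ℝ) := by exact_mod_cast hd1
        linarith
      · exact hhalf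
    calc (S.card : ℝ) ^ h ≤ (2 * (d : ℝ)) ^ h := h1
      _ = _ := h2
      _ ≤ _ := h3
  have hnn1 : (0 : ℝ) ≤ (S.card : ℝ) ^ h := pow_nonneg (Nat.cast_nonneg _) h
  have hnn2 : (0 : ℝ) ≤ (2 : ℝ) ^ m := pow_nonneg (by norm_num) m
  have hnn3 : (0 : ℝ) ≤ (2 : ℝ) ^ m * ((m : ℝ) / 2) ^ m :=
    mul_nonneg hnn2 (pow_nonneg (div_nonneg (Nat.cast_nonneg _) (by norm_num)) m)
  calc (2 : ℝ) ^ m * (h : ℝ) ^ m * (S.card : ℝ) ^ h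
      ≤ 2 ^ m * ((m : ℝ) / 2) ^ m * (S.card : ℝ) ^ h :=
        mul_le_mul_of_nonneg_right (mul_le_mul_of_nonneg_left hfac1 hnn2) hnn1
    _ ≤ 2 ^ m * ((m : ℝ) / 2) ^ m * (2 * (d : ℝ)) ^ ((m : ℝ) / 2) :=
        mul_le_mul_of_nonneg_left hfac2 hnn3
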